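/- (Lemma 1) Let $\lambda \in (0,1)$, $\beta > 0$, $r_0 > 0$, and $\theta^* \in \mathbb{R}^{n_\theta}$ with $\|\theta^*\| \leq r_0$. Let $\hat{\theta}_0 = 0$, $\Gamma_0 = \beta I_{n_\theta}$, and for each $k$ let $w_k \in \mathbb{R}^{n_x \times n_\theta}$ be arbitrary and set $\Gamma_{k+1} = \lambda \Gamma_k + w_k^\top w_k$ and $\hat{\theta}_{k+1} = \hat{\theta}_k + \Gamma_{k+1}^{-1} w_k^\top w_k (\theta^* - \hat{\theta}_k)$. Define the error bound $\mathcal{V}_k = \lambda^k \beta r_0^2$, the ellipsoidal set $\hat{\Theta}_k = \{\theta \in \mathbb{R}^{n_\theta} : (\theta - \hat{\theta}_k)^\top \Gamma_k (\theta - \hat{\theta}_k) \leq \mathcal{V}_k\}$, and the estimated uncertainty sets $\Theta_0 = \hat{\Theta}_0$ and $\Theta_k = \Theta_{k-1} \cap \hat{\Theta}_k$ for $k \geq 1$. Then $\theta^* \in \Theta_k$ for all $k \geq 0$. -/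

import Mathlib

open Matrix

private lemma posDef_smul {n : ℕ} {c : ℝ} (hc : 0 < c) {A : Matrix (Fin n) (Fin n) ℝ}
    (hA : A.PosDef) : (c • A).PosDef := by
  refine Matrix.PosDef.of_dotProduct_mulVec_pos ?_ fun x hx => ?_
  · unfold Matrix.IsHermitian
    rw [conjTranspose_smul, hA.1]
    simp
  · rw [smul_mulVec, dotProduct_smul]
    exact mul_pos hc (hA.dotProduct_mulVec_pos hx)

/-- Lemma 1: the true parameter `θ*` belongs to the estimated uncertainty set
`Θ_k` for all `k ≥ 0`. -/
theorem true_parameter_in_uncertainty_set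
    {nx nθ : ℕ}
    (lam β r0 : ℝ) (hlam0 : 0 < lam) (hlam1 : lam < 1) (hβ : 0 < β) (hr0 : 0 < r0)
    (θstar : Fin nθ → ℝ)
    (hθstar : ‖(EuclideanSpace.equiv (Fin nθ) ℝ).symm θstar‖ ≤ r0)
    (w : ℕ → Matrix (Fin nx) (Fin nθ) ℝ)
    (θhat : ℕ → Fin nθ → ℝ)
    (Γ : ℕ → Matrix (Fin nθ) (Fin nθ) ℝ)
    (hθhat0 : θhat 0 = 0)
    (hΓ0 : Γ 0 = β • (1 : Matrix (Fin nθ) (Fin nθ) ℝ))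
    (hΓ : ∀ k, Γ (k + 1) = lam • Γ k + (w k)ᵀ * w k)
    (hθhat : ∀ k, θhat (k + 1) =
      θhat k + (Γ (k + 1))⁻¹.mulVec ((w k)ᵀ.mulVec ((w k).mulVec (θstar - θhat k))))
    (𝒱 : ℕ → ℝ) (h𝒱 : ∀ k, 𝒱 k = lam ^ k * β * r0 ^ 2)
    (Θhat : ℕ → Set (Fin nθ → ℝ))
    (hΘhat : ∀ k, Θhat k =
      {θ | (θ - θhat k) ⬝ᵥ (Γ k).mulVec (θ - θhat k) ≤ 𝒱 k})
    (Θ : ℕ → Set (Fin nθ → ℝ))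
    (hΘ0 : Θ 0 = Θhat 0)
    (hΘ : ∀ k, Θ (k + 1) = Θ k ∩ Θhat (k + 1)) :
    ∀ k, θstar ∈ Θ k := by
  -- positive definiteness of Γ k
  have hPD : ∀ k, (Γ k).PosDef := by
    intro k
    induction k with
    | zero =>
      rw [hΓ0]
      exact posDef_smul hβ Matrix.PosDef.one
    | succ k ih =>
      rw [hΓ k]
      exact Matrix.PosDef.add_posSemidef (posDef_smul hlam0 ih)
        (by simpa using Matrix.posSemidef_conjTranspose_mul_self (w k))
  -- symmetry consequence: e ⬝ᵥ Γ u = u ⬝ᵥ Γ e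
  have hsymm : ∀ k (u v : Fin nθ → ℝ),
      u ⬝ᵥ (Γ k).mulVec v = v ⬝ᵥ (Γ k).mulVec u := by
    intro k u v
    have h1 : (Γ k)ᵀ = Γ k := by
      have := (hPD k).1
      simpa [Matrix.IsHermitian, conjTranspose_eq_transpose_of_trivial] using this
    rw [Matrix.dotProduct_mulVec, ← Matrix.vecMul_transpose, h1, dotProduct_comm]
  -- the main induction: quadratic error bound
  have hV : ∀ k, (θstar - θhat k) ⬝ᵥ (Γ k).mulVec (θstar - θhat k) ≤ 𝒱 k := by
    intro k
    induction k with
    | zero =>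
      rw [hθhat0, sub_zero, hΓ0, h𝒱, pow_zero, one_mul, smul_mulVec,
        dotProduct_smul, one_mulVec]
      have hnorm : θstar ⬝ᵥ θstar ≤ r0 ^ 2 := by
        have h1 : ‖(EuclideanSpace.equiv (Fin nθ) ℝ).symm θstar‖ ^ 2 ≤ r0 ^ 2 := by
          exact pow_le_pow_left₀ (norm_nonneg _) hθstar 2
        refine le_trans (le_of_eq ?_) h1
        rw [← Real.sqrt_sq (norm_nonneg ((EuclideanSpace.equiv (Fin nθ) ℝ).symm θstar)),
          EuclideanSpace.norm_eq, Real.sq_sqrt (by positivity), Real.sq_sqrt (by positivity)]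
        simp [dotProduct, Real.norm_eq_abs, sq_abs, pow_two]
      rw [smul_eq_mul]
      nlinarith
    | succ k ih =>
      set e : Fin nθ → ℝ := θstar - θhat k with he
      set u : Fin nθ → ℝ := θstar - θhat (k + 1) with hu
      have hGinv : Γ (k + 1) * (Γ (k + 1))⁻¹ = 1 :=
        Matrix.mul_nonsing_inv _ (hPD (k + 1)).det_pos.ne'.isUnit
      -- key identity : Γ(k+1) *ᵥ u = lam • (Γ k *ᵥ e)
      have hkey : (Γ (k + 1)).mulVec u = lam • (Γ k).mulVec e := by
        have hu' : u = e - (Γ (k + 1))⁻¹.mulVec ((w k)ᵀ.mulVec ((w k).mulVec e)) := by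
          rw [hu, he, hθhat k]
          abel
        rw [hu', mulVec_sub, mulVec_mulVec, hGinv, one_mulVec, hΓ k, add_mulVec,
          ← mulVec_mulVec, smul_mulVec]
        abel
      set a : ℝ := u ⬝ᵥ (Γ k).mulVec u with ha
      set b : ℝ := u ⬝ᵥ (Γ k).mulVec e with hb
      set c : ℝ := e ⬝ᵥ (Γ k).mulVec e with hc
      set s : ℝ := ((w k).mulVec u) ⬝ᵥ ((w k).mulVec u) with hs
      have hs0 : 0 ≤ s := by
        rw [hs]
        exact Finset.sum_nonneg fun i _ => mul_self_nonneg _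
      -- u ⬝ᵥ Γ(k+1) u computed two ways
      have h1 : u ⬝ᵥ (Γ (k + 1)).mulVec u = lam * b := by
        rw [hkey, dotProduct_smul, smul_eq_mul, hb]
      have h2 : u ⬝ᵥ (Γ (k + 1)).mulVec u = lam * a + s := by
        rw [hΓ k, add_mulVec, dotProduct_add, smul_mulVec, dotProduct_smul,
          smul_eq_mul, ← ha, ← mulVec_mulVec, Matrix.dotProduct_mulVec,
          Matrix.vecMul_transpose, hs]
      have hab : a ≤ b := by nlinarith [h1.symm.trans h2]
      have hquad : 0 ≤ c - 2 * b + a := by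
        have := ((hPD k).posSemidef).dotProduct_mulVec_nonneg (e - u)
        have hexp : (star (e - u)) ⬝ᵥ (Γ k).mulVec (e - u) = c - 2 * b + a := by
          have hbe : e ⬝ᵥ (Γ k).mulVec u = b := by rw [hsymm k e u, hb]
          simp only [star_trivial, mulVec_sub, dotProduct_sub, sub_dotProduct]
          rw [← hc, ← ha, hbe, ← hb]
          ring
        rw [hexp] at this
        exact this
      have hbc : b ≤ c := by linarith
      have hVk1 : 𝒱 (k + 1) = lam * 𝒱 k := by
        rw [h𝒱, h𝒱, pow_succ]; ring
      rw [h1, hVk1]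
      have : b ≤ 𝒱 k := le_trans hbc (by rw [hc, he] at *; exact ih)
      nlinarith
  -- membership in each Θhat
  have hmem : ∀ k, θstar ∈ Θhat k := by
    intro k
    rw [hΘhat k]
    exact hV k
  intro k
  induction k with
  | zero => rw [hΘ0]; exact hmem 0
  | succ k ih => rw [hΘ k]; exact ⟨ih, hmem (k + 1)⟩
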